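/- Let A ∈ GL(2,ℤ) be parabolic, i.e. tr(A)² = 4·det(A). Then for every ā ∈ 𝕋², the element (A,ā) is strongly reversible in G = GL(2,ℤ) ⋉ 𝕋². -/

import Mathlib

noncomputable section

abbrev V : Type := Fin 2 → ℝ

def L : AddSubgroup V where
  carrier := {x | ∀ i, ∃ n : ℤ, x i = (n : ℝ)}
  zero_mem' := fun i => ⟨0, by simp⟩
  add_mem' := by
    rintro a b ha hb i
    obtain ⟨m, hm⟩ := ha i
    obtain ⟨n, hn⟩ := hb i
    exact ⟨m + n, by simp [hm, hn]⟩
  neg_mem' := by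
    rintro a ha i
    obtain ⟨m, hm⟩ := ha i
    exact ⟨-m, by simp [hm]⟩

abbrev T2 := V ⧸ L

def actV (A : Matrix (Fin 2) (Fin 2) ℤ) : V →+ V :=
  (Matrix.mulVecLin (A.map (Int.cast : ℤ → ℝ))).toAddMonoidHom

lemma actV_mem (A : Matrix (Fin 2) (Fin 2) ℤ) : L ≤ L.comap (actV A) := by
  intro x hx
  show actV A x ∈ L
  intro i
  refine ⟨∑ j, A i j * Classical.choose (hx j), ?_⟩
  show (A.map (Int.cast : ℤ → ℝ)).mulVec x i = _
  simp only [Matrix.mulVec, dotProduct, Matrix.map_apply]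
  push_cast
  exact Finset.sum_congr rfl fun j _ =>
    congrArg (fun t => ((A i j : ℝ)) * t) (Classical.choose_spec (hx j))

/-- The action of an integer matrix on the torus `T2`. -/
def act (A : Matrix (Fin 2) (Fin 2) ℤ) : T2 →+ T2 :=
  QuotientAddGroup.map L L (actV A) (actV_mem A)

abbrev GL2 := (Matrix (Fin 2) (Fin 2) ℤ)ˣ

/-- Multiplication in the group `G = GL(2,ℤ) ⋉ 𝕋²`. -/
def Gmul (p q : GL2 × T2) : GL2 × T2 :=
  (p.1 * q.1, act (p.1 : Matrix (Fin 2) (Fin 2) ℤ) q.2 + p.2)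

/-- Inversion in the group `G = GL(2,ℤ) ⋉ 𝕋²`. -/
def Ginv (p : GL2 × T2) : GL2 × T2 :=
  (p.1⁻¹, -act ((p.1⁻¹ : GL2) : Matrix (Fin 2) (Fin 2) ℤ) p.2)

/- ===== auxiliary lemmas ===== -/

lemma act_mk (M : Matrix (Fin 2) (Fin 2) ℤ) (x : V) :
    act M (QuotientAddGroup.mk x) = QuotientAddGroup.mk (actV M x) := rfl

lemma actV_mul (M N : Matrix (Fin 2) (Fin 2) ℤ) (x : V) :
    actV (M * N) x = actV M (actV N x) := by
  show ((M * N).map (Int.cast : ℤ → ℝ)).mulVec x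
      = (M.map (Int.cast : ℤ → ℝ)).mulVec ((N.map (Int.cast : ℤ → ℝ)).mulVec x)
  rw [Matrix.mulVec_mulVec]
  have hm : (M * N).map (Int.cast : ℤ → ℝ)
      = M.map (Int.cast : ℤ → ℝ) * N.map (Int.cast : ℤ → ℝ) := by
    ext i j
    simp only [Matrix.mul_apply, Fin.sum_univ_two, Matrix.map_apply]
    push_cast
    ring
  rw [hm]

lemma actV_apply (M : Matrix (Fin 2) (Fin 2) ℤ) (x : V) (i : Fin 2) :
    actV M x i = (M i 0 : ℝ) * x 0 + (M i 1 : ℝ) * x 1 := by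
  show (M.map (Int.cast : ℤ → ℝ)).mulVec x i = _
  simp [Matrix.mulVec, dotProduct, Fin.sum_univ_two, Matrix.map_apply]

lemma key (A : GL2) (Hm Bm : Matrix (Fin 2) (Fin 2) ℤ)
    (hH2 : Hm * Hm = 1)
    (hB : Hm * (A : Matrix (Fin 2) (Fin 2) ℤ) * Hm = Bm)
    (hAB : (A : Matrix (Fin 2) (Fin 2) ℤ) * Bm = 1)
    (av t : V)
    (ht1 : actV Hm t + t = 0)
    (ht2 : - actV Bm t + (actV Hm av + t) = - actV Bm av) :
    ∃ h : GL2 × T2, Gmul h h = (1, 0) ∧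
      Gmul (Gmul h (A, QuotientAddGroup.mk av)) (Ginv h) = Ginv (A, QuotientAddGroup.mk av) := by
  have hAinv : ((A⁻¹ : GL2) : Matrix (Fin 2) (Fin 2) ℤ) = Bm := by
    calc ((A⁻¹ : GL2) : Matrix (Fin 2) (Fin 2) ℤ)
        = ((A⁻¹ : GL2) : Matrix (Fin 2) (Fin 2) ℤ) * ((A : Matrix (Fin 2) (Fin 2) ℤ) * Bm) := by
          rw [hAB, mul_one]
      _ = (((A⁻¹ : GL2) : Matrix (Fin 2) (Fin 2) ℤ) * (A : Matrix (Fin 2) (Fin 2) ℤ)) * Bm := by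
          rw [mul_assoc]
      _ = Bm := by rw [← Units.val_mul, inv_mul_cancel, Units.val_one, one_mul]
  refine ⟨(⟨Hm, Hm, hH2, hH2⟩, QuotientAddGroup.mk t), ?_, ?_⟩
  · refine Prod.ext (Units.ext ?_) ?_
    · exact hH2
    · show act Hm (QuotientAddGroup.mk t) + QuotientAddGroup.mk t = 0
      rw [act_mk, ← QuotientAddGroup.mk_add, ht1, QuotientAddGroup.mk_zero]
  · have hV : actV (Hm * (A : Matrix (Fin 2) (Fin 2) ℤ)) (-(actV Hm t))
        + (actV Hm av + t) = -(actV Bm av) := by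
      rw [map_neg, ← actV_mul, hB]
      exact ht2
    refine Prod.ext (Units.ext ?_) ?_
    · show Hm * (A : Matrix (Fin 2) (Fin 2) ℤ) * Hm
        = ((A⁻¹ : GL2) : Matrix (Fin 2) (Fin 2) ℤ)
      rw [hB, hAinv]
    · show act (Hm * (A : Matrix (Fin 2) (Fin 2) ℤ))
          (-(act Hm (QuotientAddGroup.mk t)))
          + (act Hm (QuotientAddGroup.mk av) + QuotientAddGroup.mk t)
        = -(act ((A⁻¹ : GL2) : Matrix (Fin 2) (Fin 2) ℤ) (QuotientAddGroup.mk av))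
      rw [hAinv]
      simp only [act_mk, ← QuotientAddGroup.mk_neg, ← QuotientAddGroup.mk_add]
      exact congrArg QuotientAddGroup.mk hV

lemma param (p b c : ℤ) (h : p ^ 2 = -(b * c)) :
    ∃ v1 v2 u1 u2 k : ℤ, v1 * u2 - v2 * u1 = 1 ∧ p = -(k * v1 * v2) ∧ b = k * v1 ^ 2 ∧
      c = -(k * v2 ^ 2) ∧ (¬(b = 0 ∧ c = 0) → k ≠ 0) := by
  by_cases hb : b = 0
  · have hp : p = 0 := by
      have : p ^ 2 = 0 := by rw [h, hb]; ring
      exact pow_eq_zero_iff (by norm_num) |>.mp this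
    by_cases hc : c = 0
    · exact ⟨1, 0, 0, 1, 0, by ring, by rw [hp]; ring, by rw [hb]; ring, by rw [hc]; ring,
        fun hn => absurd ⟨hb, hc⟩ hn⟩
    · exact ⟨0, 1, -1, 0, -c, by ring, by rw [hp]; ring, by rw [hb]; ring, by ring,
        fun _ => neg_ne_zero.mpr hc⟩
  · set g : ℤ := (Int.gcd b p : ℤ) with hg
    have hgdvdb : g ∣ b := Int.gcd_dvd_left b p
    have hgdvdp : g ∣ p := Int.gcd_dvd_right b p
    have hgpos : 0 < Int.gcd b p := Int.gcd_pos_of_ne_zero_left p hb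
    have hg0 : g ≠ 0 := by positivity
    set q1 : ℤ := b / g with hq1def
    set p1 : ℤ := p / g with hp1def
    have hbq : g * q1 = b := Int.mul_ediv_cancel' hgdvdb
    have hpp : g * p1 = p := Int.mul_ediv_cancel' hgdvdp
    have hq1ne : q1 ≠ 0 := by
      intro h0; apply hb; rw [← hbq, h0, mul_zero]
    have cop : IsCoprime q1 p1 := by
      rw [Int.isCoprime_iff_gcd_eq_one]
      exact Int.gcd_div_gcd_div_gcd hgpos
    -- g * p1^2 = -(q1 * c)
    have h2 : g * (g * p1 ^ 2) = g * (-(q1 * c)) := by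
      have : (g * p1) ^ 2 = -((g * q1) * c) := by rw [hpp, hbq]; exact h
      linear_combination this
    have h3 : g * p1 ^ 2 = -(q1 * c) := mul_left_cancel₀ hg0 h2
    have hq1g : q1 ∣ g := by
      have : q1 ∣ g * p1 ^ 2 := ⟨-c, by rw [h3]; ring⟩
      exact (cop.pow_right (n := 2)).dvd_of_dvd_mul_right this
    set k : ℤ := g / q1 with hkdef
    have hk : q1 * k = g := Int.mul_ediv_cancel' hq1g
    have hkb : b = k * q1 ^ 2 := by
      have : q1 * k * q1 = g * q1 := by rw [hk]
      rw [← hbq]; linear_combination -this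
    have hkc : c = -(k * p1 ^ 2) := by
      have h4 : q1 * (k * p1 ^ 2) = q1 * (-c) := by
        calc q1 * (k * p1 ^ 2) = (q1 * k) * p1 ^ 2 := by ring
          _ = g * p1 ^ 2 := by rw [hk]
          _ = q1 * (-c) := by rw [h3]; ring
      have := mul_left_cancel₀ hq1ne h4
      linarith
    have hkp : p = -(k * q1 * (-p1)) := by
      have : q1 * k * p1 = g * p1 := by rw [hk]
      rw [← hpp]; linear_combination -this
    have hkne : k ≠ 0 := by
      intro h0; apply hb; rw [hkb, h0]; ring
    obtain ⟨x, y, hxy⟩ := cop.neg_right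
    exact ⟨q1, -p1, -y, x, k, by linear_combination hxy, hkp, hkb,
      by rw [hkc]; ring, fun _ => hkne⟩

lemma inst_one (A : GL2)
    (hA : (A : Matrix (Fin 2) (Fin 2) ℤ) = 1) (a : T2) :
    ∃ h : GL2 × T2, Gmul h h = (1, 0) ∧
      Gmul (Gmul h (A, a)) (Ginv h) = Ginv (A, a) := by
  obtain ⟨av, rfl⟩ := QuotientAddGroup.mk_surjective a
  refine key A (-1) 1 (by simp) (by rw [hA]; simp) (by rw [hA]; simp) av 0 ?_ ?_
  · rw [map_zero, add_zero]
  · rw [map_zero, neg_zero, zero_add, add_zero]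
    funext i
    fin_cases i <;>
      simp [actV_apply, Matrix.one_apply, Matrix.neg_apply] <;> ring

lemma inst_neg (A : GL2) (v1 v2 u1 u2 k : ℤ) (hvu : v1 * u2 - v2 * u1 = 1)
    (hA : (A : Matrix (Fin 2) (Fin 2) ℤ)
      = !![-1 - k * v1 * v2, k * v1 ^ 2; -(k * v2 ^ 2), -1 + k * v1 * v2]) (a : T2) :
    ∃ h : GL2 × T2, Gmul h h = (1, 0) ∧
      Gmul (Gmul h (A, a)) (Ginv h) = Ginv (A, a) := by
  obtain ⟨av, rfl⟩ := QuotientAddGroup.mk_surjective a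
  have hvuR : (v1 : ℝ) * u2 - (v2 : ℝ) * u1 = 1 := by exact_mod_cast hvu
  refine key A !![2 * v1 * u2 - 1, -(2 * v1 * u1); 2 * v2 * u2, -(2 * v2 * u1) - 1]
    !![-1 + k * v1 * v2, -(k * v1 ^ 2); k * v2 ^ 2, -1 - k * v1 * v2]
    ?_ ?_ ?_ av
    ![av 0 - ((u2 : ℝ) * av 0 - (u1 : ℝ) * av 1) * v1,
      av 1 - ((u2 : ℝ) * av 0 - (u1 : ℝ) * av 1) * v2] ?_ ?_
  · ext i j
    fin_cases i <;> fin_cases j <;>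
      simp [Matrix.mul_apply, Fin.sum_univ_two, Matrix.one_apply]
    · linear_combination (4 * v1 * u2) * hvu
    · linear_combination (-4 * v1 * u1) * hvu
    · linear_combination (4 * v2 * u2) * hvu
    · linear_combination (-4 * v2 * u1) * hvu
  · rw [hA]
    ext i j
    fin_cases i <;> fin_cases j <;>
      simp [Matrix.mul_apply, Fin.sum_univ_two]
    · linear_combination (-4 * v1 * u2 + 2 * v1 * v2 * k) * hvu
    · linear_combination (4 * v1 * u1 - 2 * v1 ^ 2 * k) * hvu
    · linear_combination (-4 * v2 * u2 + 2 * v2 ^ 2 * k) * hvu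
    · linear_combination (4 * v2 * u1 - 2 * v1 * v2 * k) * hvu
  · rw [hA]
    ext i j
    fin_cases i <;> fin_cases j <;>
      simp [Matrix.mul_apply, Fin.sum_univ_two, Matrix.one_apply] <;> ring
  · funext i
    fin_cases i <;> simp [actV_apply, Matrix.vecHead, Matrix.vecTail] <;> push_cast
    · linear_combination (-2 * (v1 : ℝ) * u2 * av 0 + 2 * (v1 : ℝ) * u1 * av 1) * hvuR
    · linear_combination (-2 * (v2 : ℝ) * u2 * av 0 + 2 * (v2 : ℝ) * u1 * av 1) * hvuR
  · funext i
    fin_cases i <;> simp [actV_apply, Matrix.vecHead, Matrix.vecTail] <;> push_cast <;> ring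

lemma inst_pos (A : GL2) (v1 v2 u1 u2 k : ℤ) (hvu : v1 * u2 - v2 * u1 = 1) (hk : k ≠ 0)
    (hA : (A : Matrix (Fin 2) (Fin 2) ℤ)
      = !![1 - k * v1 * v2, k * v1 ^ 2; -(k * v2 ^ 2), 1 + k * v1 * v2]) (a : T2) :
    ∃ h : GL2 × T2, Gmul h h = (1, 0) ∧
      Gmul (Gmul h (A, a)) (Ginv h) = Ginv (A, a) := by
  obtain ⟨av, rfl⟩ := QuotientAddGroup.mk_surjective a
  have hvuR : (v1 : ℝ) * u2 - (v2 : ℝ) * u1 = 1 := by exact_mod_cast hvu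
  have hkR : (k : ℝ) ≠ 0 := Int.cast_ne_zero.mpr hk
  set lam : ℝ := ((k : ℝ) * (-(v2 : ℝ) * av 0 + (v1 : ℝ) * av 1)
      - 2 * ((u2 : ℝ) * av 0 - (u1 : ℝ) * av 1)) / k with hlamdef
  have hlam : (k : ℝ) * lam = (k : ℝ) * (-(v2 : ℝ) * av 0 + (v1 : ℝ) * av 1)
      - 2 * ((u2 : ℝ) * av 0 - (u1 : ℝ) * av 1) := by
    rw [hlamdef]; field_simp
  refine key A !![2 * v1 * u2 - 1, -(2 * v1 * u1); 2 * v2 * u2, -(2 * v2 * u1) - 1]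
    !![1 + k * v1 * v2, -(k * v1 ^ 2); k * v2 ^ 2, 1 - k * v1 * v2]
    ?_ ?_ ?_ av ![lam * u1, lam * u2] ?_ ?_
  · ext i j
    fin_cases i <;> fin_cases j <;>
      simp [Matrix.mul_apply, Fin.sum_univ_two, Matrix.one_apply]
    · linear_combination (4 * v1 * u2) * hvu
    · linear_combination (-4 * v1 * u1) * hvu
    · linear_combination (4 * v2 * u2) * hvu
    · linear_combination (-4 * v2 * u1) * hvu
  · rw [hA]
    ext i j
    fin_cases i <;> fin_cases j <;>
      simp [Matrix.mul_apply, Fin.sum_univ_two]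
    · linear_combination (4 * v1 * u2 + 2 * v1 * v2 * k) * hvu
    · linear_combination (-4 * v1 * u1 - 2 * v1 ^ 2 * k) * hvu
    · linear_combination (4 * v2 * u2 + 2 * v2 ^ 2 * k) * hvu
    · linear_combination (-4 * v2 * u1 - 2 * v1 * v2 * k) * hvu
  · rw [hA]
    ext i j
    fin_cases i <;> fin_cases j <;>
      simp [Matrix.mul_apply, Fin.sum_univ_two, Matrix.one_apply] <;> ring
  · funext i
    fin_cases i <;> simp [actV_apply, Matrix.vecHead, Matrix.vecTail] <;> push_cast <;> ring
  · funext i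
    fin_cases i <;> simp [actV_apply, Matrix.vecHead, Matrix.vecTail] <;> push_cast
    · linear_combination (-2 * (v1 : ℝ) * u2 * av 0 + 2 * (v1 : ℝ) * u1 * av 1
        - (v1 : ℝ) * v2 * k * av 0 + (v1 : ℝ) ^ 2 * k * av 1) * hvuR
        + (-(v1 : ℝ) * v2 * u1 + (v1 : ℝ) ^ 2 * u2) * hlam
    · linear_combination (-2 * (v2 : ℝ) * u2 * av 0 + 2 * (v2 : ℝ) * u1 * av 1
        - (v2 : ℝ) ^ 2 * k * av 0 + (v1 : ℝ) * v2 * k * av 1) * hvuR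
        + (-(v2 : ℝ) ^ 2 * u1 + (v1 : ℝ) * v2 * u2) * hlam

/-- If `A ∈ GL(2,ℤ)` is parabolic (`tr(A)² = 4 det A`), then every `(A,ā)` is strongly
reversible in `G = GL(2,ℤ) ⋉ 𝕋²`. -/
theorem parabolic_strongly_reversible (A : GL2)
    (hpar : (Matrix.trace (A : Matrix (Fin 2) (Fin 2) ℤ)) ^ 2 =
      4 * (A : Matrix (Fin 2) (Fin 2) ℤ).det) :
    ∀ a : T2, (∃ h : GL2 × T2, Gmul h h = (1, 0) ∧
      Gmul (Gmul h (A, a)) (Ginv h) = Ginv (A, a)) := by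
  intro a
  set M : Matrix (Fin 2) (Fin 2) ℤ := (A : Matrix (Fin 2) (Fin 2) ℤ) with hM
  have hdet1 : M.det = 1 ∨ M.det = -1 := by
    have hu : IsUnit M.det := by
      apply (Matrix.isUnit_iff_isUnit_det M).mp
      exact ⟨A, rfl⟩
    exact Int.isUnit_iff.mp hu
  have hdet : M.det = 1 := by
    rcases hdet1 with h | h
    · exact h
    · exfalso
      rw [h] at hpar
      nlinarith [sq_nonneg (Matrix.trace M)]
  have htr2 : (Matrix.trace M) ^ 2 = 4 := by rw [hpar, hdet, mul_one]
  have htr : Matrix.trace M = 2 ∨ Matrix.trace M = -2 := by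
    have h4 : (Matrix.trace M - 2) * (Matrix.trace M + 2) = 0 := by linear_combination htr2
    rcases mul_eq_zero.mp h4 with h | h
    · left; linarith
    · right; linarith
  have hdet' : M 0 0 * M 1 1 - M 0 1 * M 1 0 = 1 := by
    rw [Matrix.det_fin_two] at hdet; exact hdet
  rcases htr with htrA | htrA
  · -- trace = 2
    rw [Matrix.trace_fin_two] at htrA
    by_cases hbc : M 0 1 = 0 ∧ M 1 0 = 0
    · -- A = 1
      have hp0 : M 0 0 - 1 = 0 := by
        have hsq : (M 0 0 - 1) ^ 2 = 0 := by
          linear_combination (M 0 0) * htrA - hdet' - (M 1 0) * hbc.1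
        exact pow_eq_zero_iff (by norm_num) |>.mp hsq
      apply inst_one
      ext i j
      fin_cases i <;> fin_cases j <;> simp [Matrix.one_apply]
      · linarith
      · exact hbc.1
      · exact hbc.2
      · linarith
    · have hp : (M 0 0 - 1) ^ 2 = -(M 0 1 * M 1 0) := by
        linear_combination (M 0 0) * htrA - hdet'
      obtain ⟨v1, v2, u1, u2, k, hvu, hkp, hkb, hkc, hkne⟩ := param _ _ _ hp
      apply inst_pos A v1 v2 u1 u2 k hvu (hkne hbc)
      ext i j
      fin_cases i <;> fin_cases j <;> simp
      · linear_combination hkp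
      · exact hkb
      · exact hkc
      · linear_combination htrA - hkp
  · -- trace = -2
    rw [Matrix.trace_fin_two] at htrA
    have hp : (M 0 0 + 1) ^ 2 = -(M 0 1 * M 1 0) := by
      linear_combination (M 0 0) * htrA - hdet'
    obtain ⟨v1, v2, u1, u2, k, hvu, hkp, hkb, hkc, _⟩ := param _ _ _ hp
    apply inst_neg A v1 v2 u1 u2 k hvu
    ext i j
    fin_cases i <;> fin_cases j <;> simp
    · linear_combination hkp
    · exact hkb
    · exact hkc
    · linear_combination htrA - hkp
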